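/- If a reversible graph-walking automaton with m states exists recognizing a set of graphs L, then there exists a returning and halting graph-walking automaton with m+1 states recognizing L. Consequently, any lower bound N on the size of returning-and-halting automata for L implies the lower bound N-1 on the size of reversible automata for L. -/

import Mathlib

attribute [local instance 10] Classical.propDecidable

/-- A signature: directions with an involutive opposite, node labels,
initial labels, and the set of directions allowed at each label. -/
structure Signature where
  Dir : Type
  neg : Dir → Dir
  neg_neg : ∀ d, neg (neg d) = d
  Lab : Type
  isInit : Lab → Bool
  dirs : Lab → Set Dir

/-- A finite graph over a signature. -/
structure SGraph (S : Signature) where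
  V : Type
  fin : Finite V
  v0 : V
  lab : V → S.Lab
  move : V → S.Dir → Option V
  move_inv : ∀ v d w, move v d = some w → move w (S.neg d) = some v
  move_defined : ∀ v d, (move v d).isSome ↔ d ∈ S.dirs (lab v)
  init_iff : ∀ v, S.isInit (lab v) = true ↔ v = v0

/-- A deterministic graph-walking automaton over a signature. -/
structure GWA (S : Signature) where
  Q : Type
  finQ : Finite Q
  q0 : Q
  F : Q → S.Lab → Bool
  δ : Q → S.Lab → Option (Q × S.Dir)
  δ_dir : ∀ q a p d, δ q a = some (p, d) → d ∈ S.dirs a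
  δ_not_F : ∀ q a, F q a = true → δ q a = none

namespace GWA

variable {S : Signature}

/-- One step of the computation, over an abstract node set with a move
function and a labelling. -/
def stepOn (A : GWA S) {V : Type} (move : V → S.Dir → Option V) (lab : V → S.Lab) :
    A.Q × V → Option (A.Q × V) := fun c =>
  if A.F c.1 (lab c.2) = true then none
  else match A.δ c.1 (lab c.2) with
    | none => none
    | some (p, d) => (move c.2 d).map fun w => (p, w)

/-- The configuration after `t` steps, starting from configuration `c`. -/
def runOn (A : GWA S) {V : Type} (move : V → S.Dir → Option V) (lab : V → S.Lab)
    (c : A.Q × V) : ℕ → Option (A.Q × V)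
  | 0 => some c
  | n + 1 => (runOn A move lab c n).bind (A.stepOn move lab)

def runFrom (A : GWA S) (G : SGraph S) (c : A.Q × G.V) : ℕ → Option (A.Q × G.V) :=
  A.runOn G.move G.lab c

/-- The computation of `A` on `G`, from the initial configuration. -/
def run (A : GWA S) (G : SGraph S) : ℕ → Option (A.Q × G.V) :=
  A.runFrom G (A.q0, G.v0)

def stateAt (A : GWA S) (G : SGraph S) (c : A.Q × G.V) (t : ℕ) : Option A.Q :=
  (A.runFrom G c t).map Prod.fst

def nodeAt (A : GWA S) (G : SGraph S) (c : A.Q × G.V) (t : ℕ) : Option G.V :=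
  (A.runFrom G c t).map Prod.snd

/-- The direction used by the transition taken at time `t`. -/
def dirAt (A : GWA S) (G : SGraph S) (c : A.Q × G.V) (t : ℕ) : Option S.Dir :=
  (A.runFrom G c t).bind fun x => (A.δ x.1 (G.lab x.2)).map Prod.snd

def Accepts (A : GWA S) (G : SGraph S) : Prop :=
  ∃ n c, A.run G n = some c ∧ A.F c.1 (G.lab c.2) = true

/-- A GWA is returning if it can accept only at the initial node. -/
def Returning (A : GWA S) : Prop :=
  ∀ q a, A.F q a = true → S.isInit a = true

/-- A GWA is halting if its computation on every (finite) graph is finite. -/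
def Halting (A : GWA S) : Prop :=
  ∀ G : SGraph S, ∃ n, A.run G n = none

/-- Direction-determinate: every state is entered in a unique direction. -/
def DirDet (A : GWA S) (d : A.Q → S.Dir) : Prop :=
  ∀ p a q d', A.δ p a = some (q, d') → d' = d q

/-- Backward determinism of the transition function. -/
def BackDet (A : GWA S) (d : A.Q → S.Dir) : Prop :=
  ∀ a q p1 p2, A.δ p1 a = some (q, d q) → A.δ p2 a = some (q, d q) → p1 = p2

/-- A reversible graph-walking automaton. -/
def Reversible (A : GWA S) : Prop :=
  (∃ d : A.Q → S.Dir, A.DirDet d ∧ A.BackDet d) ∧ A.Returning ∧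
    ∀ a q1 q2, A.F q1 a = true → A.F q2 a = true → q1 = q2

/-- The state `q` is entered via a transition in direction `d` taken during
the computation of `A` on `G`. -/
def EnteredVia (A : GWA S) (G : SGraph S) (d : S.Dir) (q : A.Q) : Prop :=
  ∃ t c, A.run G t = some c ∧ A.δ c.1 (G.lab c.2) = some (q, d)

end GWA
namespace GWA

variable {S : Signature}

lemma runOn_add (A : GWA S) {V : Type} (move : V → S.Dir → Option V) (lab : V → S.Lab)
    (c : A.Q × V) (a b : ℕ) :
    A.runOn move lab c (a + b) =
      (A.runOn move lab c a).bind (fun c' => A.runOn move lab c' b) := by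
  induction b with
  | zero =>
    rw [Nat.add_zero]
    cases h : A.runOn move lab c a <;> rfl
  | succ b ih =>
    show A.runOn move lab c ((a + b) + 1) = _
    rw [runOn, ih, Option.bind_assoc]
    rfl

lemma run_succ (A : GWA S) (G : SGraph S) (t : ℕ) :
    A.run G (t + 1) = (A.run G t).bind (A.stepOn G.move G.lab) := rfl

lemma run_zero (A : GWA S) (G : SGraph S) : A.run G 0 = some (A.q0, G.v0) := rfl

noncomputable def addF (A : GWA S) : Option A.Q → S.Lab → Bool
  | none, a => A.F A.q0 a
  | some q, a => if q = A.q0 ∧ S.isInit a = true then false else A.F q a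

noncomputable def addδ (A : GWA S) : Option A.Q → S.Lab → Option (Option A.Q × S.Dir)
  | none, a => (A.δ A.q0 a).map fun pd => (some pd.1, pd.2)
  | some q, a => if q = A.q0 ∧ S.isInit a = true then none
      else (A.δ q a).map fun pd => (some pd.1, pd.2)

/-- A with a fresh non-reenterable initial state (and cycle detection at the
re-entered original initial configuration). -/
noncomputable def addInit (A : GWA S) : GWA S where
  Q := Option A.Q
  finQ := by have := @Fintype.ofFinite _ A.finQ; exact Finite.of_fintype _
  q0 := none
  F := addF A
  δ := addδ A
  δ_dir := by
    intro q a p d h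
    rcases q with _ | q
    · rw [addδ, Option.map_eq_some_iff] at h
      obtain ⟨⟨p', d'⟩, h1, h2⟩ := h
      cases h2
      exact A.δ_dir _ _ _ _ h1
    · rw [addδ] at h
      by_cases hs : q = A.q0 ∧ S.isInit a = true
      · rw [if_pos hs] at h; cases h
      · rw [if_neg hs, Option.map_eq_some_iff] at h
        obtain ⟨⟨p', d'⟩, h1, h2⟩ := h
        cases h2
        exact A.δ_dir _ _ _ _ h1
  δ_not_F := by
    intro q a h
    rcases q with _ | q
    · rw [addF] at h
      rw [addδ, A.δ_not_F _ _ h]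
      rfl
    · rw [addF] at h
      rw [addδ]
      by_cases hs : q = A.q0 ∧ S.isInit a = true
      · exact if_pos hs
      · rw [if_neg hs] at h
        rw [if_neg hs, A.δ_not_F _ _ h]
        rfl

lemma addInit_F (A : GWA S) : (addInit A).F = addF A := rfl
lemma addInit_δ (A : GWA S) : (addInit A).δ = addδ A := rfl

section Sim

variable (A : GWA S) (G : SGraph S)

/-- lift a configuration of `A` to one of `addInit A`. -/
def liftC (c : A.Q × G.V) : (addInit A).Q × G.V := (some c.1, c.2)

lemma addInit_step_none (v : G.V) :
    (addInit A).stepOn G.move G.lab (none, v) =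
      (A.stepOn G.move G.lab (A.q0, v)).map (liftC A G) := by
  unfold stepOn
  simp only [addInit_F, addInit_δ, addF, addδ]
  by_cases hF : A.F A.q0 (G.lab v) = true
  · erw [if_pos hF, if_pos hF]
    rfl
  · erw [if_neg hF, if_neg hF]
    rcases hδ : A.δ A.q0 (G.lab v) with _ | ⟨p, d⟩
    · rfl
    · show (G.move v d).map (fun w => ((some p : Option A.Q), w)) =
        ((G.move v d).map (fun w => (p, w))).map (liftC A G)
      cases G.move v d <;> rfl

lemma addInit_step_some (q : A.Q) (v : G.V) (h : ¬(q = A.q0 ∧ S.isInit (G.lab v) = true)) :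
    (addInit A).stepOn G.move G.lab (some q, v) =
      (A.stepOn G.move G.lab (q, v)).map (liftC A G) := by
  unfold stepOn
  simp only [addInit_F, addInit_δ, addF, addδ]
  simp only [if_neg h]
  by_cases hF : A.F q (G.lab v) = true
  · erw [if_pos hF, if_pos hF]
    rfl
  · erw [if_neg hF, if_neg hF]
    rcases hδ : A.δ q (G.lab v) with _ | ⟨p, d⟩
    · rfl
    · show (G.move v d).map (fun w => ((some p : Option A.Q), w)) =
        ((G.move v d).map (fun w => (p, w))).map (liftC A G)
      cases G.move v d <;> rfl

lemma addInit_step_special (v : G.V) (h : S.isInit (G.lab v) = true) :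
    (addInit A).stepOn G.move G.lab (some A.q0, v) = none := by
  unfold stepOn
  simp only [addInit_F, addInit_δ, addF, addδ]
  simp [h]

lemma addInit_run_zero : (addInit A).run G 0 = some (none, G.v0) := rfl

/-- Backward simulation: any configuration of `addInit A` at positive time is
the lift of `A`'s configuration at the same time. -/
lemma rsim : ∀ t c', (addInit A).run G (t + 1) = some c' →
    ∃ c, A.run G (t + 1) = some c ∧ c' = liftC A G c := by
  intro t
  induction t with
  | zero =>
    intro c' h
    erw [run_succ, addInit_run_zero, Option.bind_some, addInit_step_none,
      Option.map_eq_some_iff] at h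
    obtain ⟨c, hc, he⟩ := h
    exact ⟨c, by rw [run_succ, run_zero, Option.bind_some]; exact hc, he.symm⟩
  | succ t ih =>
    intro c' h
    rw [run_succ, Option.bind_eq_some_iff] at h
    obtain ⟨c'', hc'', hstep⟩ := h
    obtain ⟨c1, hc1, rfl⟩ := ih c'' hc''
    by_cases hs : c1.1 = A.q0 ∧ S.isInit (G.lab c1.2) = true
    · exfalso
      have hnone : (addInit A).stepOn G.move G.lab (liftC A G c1) = none := by
        have h2 := addInit_step_special A G c1.2 hs.2
        rw [liftC, hs.1]; exact h2
      rw [hnone] at hstep; cases hstep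
    · rw [liftC] at hstep
      rw [addInit_step_some A G _ _ hs, Option.map_eq_some_iff] at hstep
      obtain ⟨c, hc, he⟩ := hstep
      refine ⟨c, ?_, he.symm⟩
      rw [run_succ, hc1, Option.bind_some]
      exact hc

/-- Forward simulation: either `addInit A` follows `A`'s computation, or `A`'s
computation has revisited its initial configuration. -/
lemma sim : ∀ t c, A.run G (t + 1) = some c →
    (addInit A).run G (t + 1) = some (liftC A G c) ∨
      ∃ s, 1 ≤ s ∧ s ≤ t + 1 ∧ A.run G s = some (A.q0, G.v0) := by
  intro t
  induction t with
  | zero =>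
    intro c h
    left
    rw [run_succ, run_zero, Option.bind_some] at h
    erw [run_succ, addInit_run_zero, Option.bind_some, addInit_step_none, h]
    rfl
  | succ t ih =>
    intro c h
    rw [run_succ, Option.bind_eq_some_iff] at h
    obtain ⟨c1, hc1, hstep⟩ := h
    rcases ih c1 hc1 with hB | ⟨s, hs1, hs2, hs3⟩
    · by_cases hs : c1.1 = A.q0 ∧ S.isInit (G.lab c1.2) = true
      · right
        refine ⟨t + 1, le_add_self, by omega, ?_⟩
        have hv : c1.2 = G.v0 := (G.init_iff c1.2).mp hs.2
        rw [← hs.1, ← hv]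
        exact hc1
      · left
        rw [run_succ, hB, Option.bind_some, liftC, addInit_step_some A G _ _ hs, hstep]
        rfl
    · exact Or.inr ⟨s, hs1, by omega, hs3⟩

/-- Injectivity of the step function of a reversible automaton. -/
lemma step_inj (d : A.Q → S.Dir) (hdd : A.DirDet d) (hbd : A.BackDet d)
    (c1 c2 c : A.Q × G.V) (h1 : A.stepOn G.move G.lab c1 = some c)
    (h2 : A.stepOn G.move G.lab c2 = some c) : c1 = c2 := by
  unfold stepOn at h1 h2
  by_cases hF1 : A.F c1.1 (G.lab c1.2) = true
  · rw [if_pos hF1] at h1; cases h1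
  by_cases hF2 : A.F c2.1 (G.lab c2.2) = true
  · rw [if_pos hF2] at h2; cases h2
  rw [if_neg hF1] at h1
  rw [if_neg hF2] at h2
  rcases hδ1 : A.δ c1.1 (G.lab c1.2) with _ | ⟨p1, d1⟩ <;> rw [hδ1] at h1
  · cases h1
  rcases hδ2 : A.δ c2.1 (G.lab c2.2) with _ | ⟨p2, d2⟩ <;> rw [hδ2] at h2
  · cases h2
  rw [Option.map_eq_some_iff] at h1 h2
  obtain ⟨w1, hw1, he1⟩ := h1
  obtain ⟨w2, hw2, he2⟩ := h2
  have hp1 : p1 = c.1 := congrArg Prod.fst he1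
  have hp2 : p2 = c.1 := congrArg Prod.fst he2
  have hww1 : w1 = c.2 := congrArg Prod.snd he1
  have hww2 : w2 = c.2 := congrArg Prod.snd he2
  have hd1 : d1 = d c.1 := by
    have := hdd _ _ _ _ hδ1
    rw [this, hp1]
  have hd2 : d2 = d c.1 := by
    have := hdd _ _ _ _ hδ2
    rw [this, hp2]
  have hv1 : G.move c.2 (S.neg (d c.1)) = some c1.2 :=
    G.move_inv _ _ _ (by rw [← hd1, ← hww1]; exact hw1)
  have hv2 : G.move c.2 (S.neg (d c.1)) = some c2.2 :=
    G.move_inv _ _ _ (by rw [← hd2, ← hww2]; exact hw2)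
  have hv : c1.2 = c2.2 := by
    rw [hv1] at hv2
    exact Option.some.inj hv2
  have hq : c1.1 = c2.1 := by
    apply hbd (G.lab c1.2) c.1
    · rw [hδ1, hp1, hd1]
    · rw [hv, hδ2, hp2, hd2]
  exact Prod.ext hq hv

/-- If the run repeats a configuration, it returns to the initial one. -/
lemma run_returns (d : A.Q → S.Dir) (hdd : A.DirDet d) (hbd : A.BackDet d)
    (hall : ∀ t, ∃ x, A.run G t = some x) :
    ∀ i j, i < j → A.run G i = A.run G j →
      ∃ s, 1 ≤ s ∧ A.run G s = some (A.q0, G.v0) := by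
  intro i
  induction i with
  | zero =>
    intro j hij h
    exact ⟨j, hij, by rw [← h]; rfl⟩
  | succ i ih =>
    intro j hij h
    obtain ⟨j', rfl⟩ : ∃ j', j = j' + 1 := ⟨j - 1, by omega⟩
    obtain ⟨ci, hci⟩ := hall i
    obtain ⟨cj, hcj⟩ := hall j'
    obtain ⟨x, hx⟩ := hall (i + 1)
    have hsi : A.stepOn G.move G.lab ci = some x := by
      have h2 := hx
      rw [run_succ, hci, Option.bind_some] at h2
      exact h2
    have hsj : A.stepOn G.move G.lab cj = some x := by
      have h2 := hx
      rw [h, run_succ, hcj, Option.bind_some] at h2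
      exact h2
    have hcc : ci = cj := step_inj A G d hdd hbd _ _ _ hsi hsj
    exact ih j' (by omega) (by rw [hci, hcj, hcc])

lemma run_periodic (s : ℕ) (hs : A.run G s = some (A.q0, G.v0)) (t : ℕ) :
    A.run G (s + t) = A.run G t := by
  show A.runOn G.move G.lab (A.q0, G.v0) (s + t) = _
  rw [runOn_add]
  have h0 : A.runOn G.move G.lab (A.q0, G.v0) s = some (A.q0, G.v0) := hs
  rw [h0, Option.bind_some]
  rfl

end Sim

end GWA

/-- from an m-state reversible GWA one obtains a returning and
halting GWA with m+1 states recognizing the same set of graphs; consequently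
a lower bound N for returning-and-halting automata yields the lower bound
N - 1 for reversible automata. -/
theorem stmt6 (S : Signature) (A : GWA S) (m : ℕ) (hm : Nat.card A.Q = m)
    (hrev : A.Reversible) :
    (∃ B : GWA S, Nat.card B.Q = m + 1 ∧ B.Returning ∧ B.Halting ∧
      ∀ G : SGraph S, B.Accepts G ↔ A.Accepts G) ∧
    (∀ N : ℕ,
      (∀ C : GWA S, C.Returning → C.Halting →
        (∀ G : SGraph S, C.Accepts G ↔ A.Accepts G) → N ≤ Nat.card C.Q) →
      N - 1 ≤ m) := by
  obtain ⟨⟨d, hdd, hbd⟩, hret, -⟩ := hrev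
  have main : ∃ B : GWA S, Nat.card B.Q = m + 1 ∧ B.Returning ∧ B.Halting ∧
      ∀ G : SGraph S, B.Accepts G ↔ A.Accepts G := by
    refine ⟨GWA.addInit A, ?_, ?_, ?_, ?_⟩
    · -- cardinality
      show Nat.card (Option A.Q) = m + 1
      haveI : Fintype A.Q := @Fintype.ofFinite _ A.finQ
      rw [Nat.card_eq_fintype_card, Fintype.card_option, ← Nat.card_eq_fintype_card, hm]
    · -- returning
      intro q a h
      rcases q with _ | q
      · exact hret _ _ h
      · have h2 : (if q = A.q0 ∧ S.isInit a = true then false else A.F q a) = true := h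
        by_cases hs : q = A.q0 ∧ S.isInit a = true
        · rw [if_pos hs] at h2; cases h2
        · rw [if_neg hs] at h2
          exact hret _ _ h2
    · -- halting
      intro G
      by_contra hno
      push_neg at hno
      have hallB : ∀ n, ∃ x, (GWA.addInit A).run G n = some x := fun n =>
        Option.ne_none_iff_exists'.mp (hno n)
      have hallA : ∀ t, ∃ x, A.run G t = some x := by
        intro t
        cases t with
        | zero => exact ⟨_, rfl⟩
        | succ t =>
          obtain ⟨c', hc'⟩ := hallB (t + 1)
          obtain ⟨c, hc, -⟩ := GWA.rsim A G t c' hc'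
          exact ⟨c, hc⟩
      have hrep : ∃ i j, i < j ∧ A.run G i = A.run G j := by
        choose f hf using hallA
        haveI : Finite A.Q := A.finQ
        haveI : Finite G.V := G.fin
        obtain ⟨i, j, hij, hfij⟩ := Finite.exists_ne_map_eq_of_infinite f
        rcases Nat.lt_or_ge i j with h | h
        · exact ⟨i, j, h, by rw [hf i, hf j, hfij]⟩
        · exact ⟨j, i, by omega, by rw [hf i, hf j, hfij]⟩
      obtain ⟨i, j, hij, hrun⟩ := hrep
      obtain ⟨s, hs1, hs2⟩ := GWA.run_returns A G d hdd hbd hallA i j hij hrun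
      obtain ⟨s', rfl⟩ : ∃ s', s = s' + 1 := ⟨s - 1, by omega⟩
      obtain ⟨c', hc'⟩ := hallB (s' + 1)
      obtain ⟨c, hc, hce⟩ := GWA.rsim A G s' c' hc'
      rw [hs2] at hc
      cases Option.some.inj hc
      have hnone : (GWA.addInit A).run G (s' + 1 + 1) = none := by
        rw [GWA.run_succ, hc', Option.bind_some, hce]
        exact GWA.addInit_step_special A G G.v0 ((G.init_iff G.v0).mpr rfl)
      exact hno _ hnone
    · -- language equivalence
      intro G
      constructor
      · rintro ⟨n, c', hrun, hF⟩
        cases n with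
        | zero =>
          have h0 : (some ((none : Option A.Q), G.v0) : Option ((GWA.addInit A).Q × G.V))
              = some c' := hrun
          cases Option.some.inj h0
          exact ⟨0, (A.q0, G.v0), rfl, hF⟩
        | succ t =>
          obtain ⟨c, hc, rfl⟩ := GWA.rsim A G t c' hrun
          have h2 : (if c.1 = A.q0 ∧ S.isInit (G.lab c.2) = true then false
              else A.F c.1 (G.lab c.2)) = true := hF
          by_cases hs : c.1 = A.q0 ∧ S.isInit (G.lab c.2) = true
          · rw [if_pos hs] at h2; cases h2
          · rw [if_neg hs] at h2
            exact ⟨t + 1, c, hc, h2⟩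
      · rintro ⟨n, c, hrun, hF⟩
        cases n with
        | zero =>
          have h0 : (some (A.q0, G.v0) : Option (A.Q × G.V)) = some c := hrun
          cases Option.some.inj h0
          exact ⟨0, (none, G.v0), rfl, hF⟩
        | succ t =>
          rcases GWA.sim A G t c hrun with hB | ⟨s, hs1, -, hs3⟩
          · by_cases hs : c.1 = A.q0 ∧ S.isInit (G.lab c.2) = true
            · refine ⟨0, (none, G.v0), rfl, ?_⟩
              show A.F A.q0 (G.lab G.v0) = true
              have hv : c.2 = G.v0 := (G.init_iff _).mp hs.2
              rw [← hs.1, ← hv]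
              exact hF
            · refine ⟨t + 1, GWA.liftC A G c, hB, ?_⟩
              show (if c.1 = A.q0 ∧ S.isInit (G.lab c.2) = true then false
                else A.F c.1 (G.lab c.2)) = true
              rw [if_neg hs]
              exact hF
          · exfalso
            have hnone : A.run G (t + 1 + 1) = none := by
              rw [GWA.run_succ, hrun, Option.bind_some]
              show (if A.F c.1 (G.lab c.2) = true then none else _) = none
              rw [if_pos hF]
            have h1 : A.run G (s + (t + 1)) = some c := by
              rw [GWA.run_periodic A G s hs3]
              exact hrun
            have h2 : A.run G (s + (t + 1)) = none := by
              obtain ⟨k, hk⟩ : ∃ k, s + (t + 1) = (t + 1 + 1) + k := ⟨s - 1, by omega⟩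
              rw [hk]
              show A.runOn G.move G.lab (A.q0, G.v0) ((t + 1 + 1) + k) = none
              rw [GWA.runOn_add]
              have h3 : A.runOn G.move G.lab (A.q0, G.v0) (t + 1 + 1) = none := hnone
              rw [h3]
              rfl
            rw [h1] at h2
            cases h2
  refine ⟨main, fun N hN => ?_⟩
  obtain ⟨B, hB, h1, h2, h3⟩ := main
  have := hN B h1 h2 h3
  omega
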